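/- Let n ≥ 1 and let r, r' ≤ n. Let α, β : Fin n → ℝ with α(j) > 0 and β(j) > 0 for all j. Suppose that for every t ∈ ℝ, (∏_{j<r} sinh(α(j)·t)) · (∏_{r ≤ j<n} sin(α(j)·t)) = (∏_{j<r'} sinh(β(j)·t)) · (∏_{r' ≤ j<n} sin(β(j)·t)). Then r = r', the multiset {α(j) : j < r} equals the multiset {β(j) : j < r'}, and the multiset {α(j) : r ≤ j < n} equals the multiset {β(j) : r' ≤ j < n}. -/

import Mathlib

open scoped BigOperators
open Filter Topology

set_option linter.unusedVariables false
set_option linter.unnecessarySimpa false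

section SinhSinRigidityAux






lemma msProd_pos {S : Multiset ℝ} (h : ∀ a ∈ S, 0 < a) : 0 < S.prod := by
  induction S using Multiset.induction with
  | empty => simp
  | cons a S ih =>
    rw [Multiset.prod_cons]
    exact mul_pos (h a (Multiset.mem_cons_self a S))
      (ih fun b hb => h b (Multiset.mem_cons_of_mem hb))

lemma exists_max (S : Multiset ℝ) (h : S ≠ 0) : ∃ M ∈ S, ∀ a ∈ S, a ≤ M := by
  induction S using Multiset.induction with
  | empty => exact absurd rfl h
  | cons a S ih =>
    rcases eq_or_ne S 0 with rfl | hS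
    · exact ⟨a, Multiset.mem_cons_self a 0, by simp⟩
    · obtain ⟨M, hM, hMax⟩ := ih hS
      refine ⟨max a M, ?_, ?_⟩
      · rcases le_total a M with h' | h'
        · rw [max_eq_right h']; exact Multiset.mem_cons_of_mem hM
        · rw [max_eq_left h']; exact Multiset.mem_cons_self a S
      · intro b hb
        rcases Multiset.mem_cons.1 hb with rfl | hb
        · exact le_max_left _ _
        · exact le_trans (hMax b hb) (le_max_right _ _)

lemma exists_min (S : Multiset ℝ) (h : S ≠ 0) : ∃ m ∈ S, ∀ a ∈ S, m ≤ a := by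
  obtain ⟨M, hM, hMax⟩ := exists_max (S.map (fun x => -x)) (by simpa using h)
  obtain ⟨m, hm, rfl⟩ := Multiset.mem_map.1 hM
  exact ⟨m, hm, fun a ha => by
    have := hMax (-a) (Multiset.mem_map_of_mem _ ha); linarith⟩

lemma tendsto_rpow_zero {a : ℝ} (ha : 0 < a) :
    Tendsto (fun x : ℝ => x ^ a) (𝓝[>] (0:ℝ)) (𝓝 0) := by
  have h := (Real.continuousAt_rpow_const 0 a (Or.inr ha.le)).continuousWithinAt
    (s := Set.Ioi (0:ℝ))
  simpa [ContinuousWithinAt, Real.zero_rpow ha.ne'] using h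

lemma tendsto_P_one (S : Multiset ℝ) (hS : ∀ a ∈ S, 0 < a) :
    Tendsto (fun x : ℝ => (S.map fun a => 1 - x ^ a).prod) (𝓝[>] (0:ℝ)) (𝓝 1) := by
  induction S using Multiset.induction with
  | empty => simpa using tendsto_const_nhds
  | cons a S ih =>
    have h1 : Tendsto (fun x : ℝ => 1 - x ^ a) (𝓝[>] (0:ℝ)) (𝓝 1) := by
      simpa using tendsto_const_nhds.sub (tendsto_rpow_zero (hS a (Multiset.mem_cons_self a S)))
    have h2 := ih fun b hb => hS b (Multiset.mem_cons_of_mem hb)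
    simpa [Multiset.prod_cons] using h1.mul h2






lemma tendsto_count (S : Multiset ℝ) (m : ℝ) (hm : 0 < m) (hS : ∀ a ∈ S, m ≤ a) :
    Tendsto (fun x : ℝ => (1 - (S.map fun a => 1 - x ^ a).prod) / x ^ m)
      (𝓝[>] (0:ℝ)) (𝓝 (S.count m)) := by
  induction S using Multiset.induction with
  | empty =>
    refine Tendsto.congr' ?_ tendsto_const_nhds
    filter_upwards [self_mem_nhdsWithin] with x hx
    simp
  | cons a S ih =>
    have hSpos : ∀ b ∈ S, 0 < b := fun b hb => lt_of_lt_of_le hm (hS b (Multiset.mem_cons_of_mem hb))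
    have ham : m ≤ a := hS a (Multiset.mem_cons_self a S)
    have key : ∀ x ∈ Set.Ioi (0:ℝ),
        (1 - ((a ::ₘ S).map fun b => 1 - x ^ b).prod) / x ^ m
          = (1 - (S.map fun b => 1 - x ^ b).prod) / x ^ m
            + x ^ (a - m) * (S.map fun b => 1 - x ^ b).prod := by
      intro x hx
      have hx : (0:ℝ) < x := hx
      have hxm : x ^ m ≠ 0 := (Real.rpow_pos_of_pos hx m).ne'
      rw [Multiset.map_cons, Multiset.prod_cons, Real.rpow_sub hx]
      field_simp
      ring
    have h2 : Tendsto (fun x : ℝ => x ^ (a - m) * (S.map fun b => 1 - x ^ b).prod)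
        (𝓝[>] (0:ℝ)) (𝓝 (if a = m then 1 else 0)) := by
      rcases eq_or_ne a m with rfl | hne
      · simp only [sub_self, if_pos rfl]
        have : Tendsto (fun x : ℝ => x ^ (0:ℝ)) (𝓝[>] (0:ℝ)) (𝓝 1) := by
          refine Tendsto.congr' ?_ tendsto_const_nhds
          filter_upwards [self_mem_nhdsWithin] with x hx
          exact (Real.rpow_zero x).symm
        simpa using this.mul (tendsto_P_one S hSpos)
      · rw [if_neg hne]
        have : Tendsto (fun x : ℝ => x ^ (a - m)) (𝓝[>] (0:ℝ)) (𝓝 0) :=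
          tendsto_rpow_zero (by cases lt_or_eq_of_le ham with
            | inl h => linarith
            | inr h => exact absurd h.symm hne)
        simpa using this.mul (tendsto_P_one S hSpos)
    have := (ih (fun b hb => hS b (Multiset.mem_cons_of_mem hb))).add h2
    refine Tendsto.congr' (Filter.eventuallyEq_of_mem self_mem_nhdsWithin fun x hx => (key x hx).symm) ?_
    convert this using 2
    rw [Multiset.count_cons]
    push_cast
    rcases eq_or_ne a m with rfl | hne
    · simp
    · simp [hne, hne.symm]




lemma P_bounds {S : Multiset ℝ} (hS : ∀ a ∈ S, 0 < a) {x : ℝ} (hx : x ∈ Set.Ioo (0:ℝ) 1) :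
    0 < (S.map fun a => 1 - x ^ a).prod ∧ (S.map fun a => 1 - x ^ a).prod ≤ 1 := by
  induction S using Multiset.induction with
  | empty => simp
  | cons a S ih =>
    have ha := hS a (Multiset.mem_cons_self a S)
    have h1 : 0 < 1 - x ^ a := by
      have := Real.rpow_lt_one hx.1.le hx.2 ha; linarith
    have h2 : 1 - x ^ a ≤ 1 := by
      have := Real.rpow_pos_of_pos hx.1 a; linarith
    obtain ⟨ih1, ih2⟩ := ih fun b hb => hS b (Multiset.mem_cons_of_mem hb)
    rw [Multiset.map_cons, Multiset.prod_cons]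
    constructor
    · exact mul_pos h1 ih1
    · calc (1 - x ^ a) * (S.map fun b => 1 - x ^ b).prod ≤ 1 * 1 := by
            apply mul_le_mul h2 ih2 ih1.le; norm_num
        _ = 1 := one_mul 1

lemma P_lt_one {S : Multiset ℝ} (hS : ∀ a ∈ S, 0 < a) (hne : S ≠ 0) {x : ℝ}
    (hx : x ∈ Set.Ioo (0:ℝ) 1) : (S.map fun a => 1 - x ^ a).prod < 1 := by
  obtain ⟨a, haS⟩ := Multiset.exists_mem_of_ne_zero hne
  obtain ⟨T, rfl⟩ := Multiset.exists_cons_of_mem haS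
  have ha := hS a (Multiset.mem_cons_self a T)
  have h1 : (0:ℝ) < x ^ a := Real.rpow_pos_of_pos hx.1 a
  have h2 : x ^ a < 1 := Real.rpow_lt_one hx.1.le hx.2 ha
  obtain ⟨p1, p2⟩ := P_bounds (fun b hb => hS b (Multiset.mem_cons_of_mem hb)) hx
  rw [Multiset.map_cons, Multiset.prod_cons]
  nlinarith

lemma prod_one_sub_rpow_inj : ∀ (k : ℕ) (S S' : Multiset ℝ), Multiset.card S = k →
    (∀ a ∈ S, 0 < a) → (∀ a ∈ S', 0 < a) →
    (∀ x ∈ Set.Ioo (0:ℝ) 1,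
      (S.map fun a => 1 - x ^ a).prod = (S'.map fun a => 1 - x ^ a).prod) →
    S = S' := by
  intro k
  induction k with
  | zero =>
    intro S S' hcard hS hS' heq
    rw [Multiset.card_eq_zero] at hcard
    subst hcard
    by_contra hne
    have hne' : S' ≠ 0 := fun h => hne h.symm
    have h2 := P_lt_one hS' hne' (x := 1/2) (by norm_num)
    have := heq (1/2) (by norm_num)
    simp only [Multiset.map_zero, Multiset.prod_zero] at this
    rw [← this] at h2
    exact absurd h2 (lt_irrefl 1)
  | succ k ih =>
    intro S S' hcard hS hS' heq
    have hSne : S ≠ 0 := by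
      intro h; rw [h] at hcard; simp at hcard
    -- min of S + S'
    have hsum : S + S' ≠ 0 := by
      intro h
      exact hSne (by simpa using congrArg Multiset.card h : S = 0 ∧ S' = 0).1
    obtain ⟨m, hmmem, hmin⟩ := exists_min (S + S') hsum
    have hm : 0 < m := by
      rcases Multiset.mem_add.1 hmmem with h | h
      exacts [hS m h, hS' m h]
    have hminS : ∀ a ∈ S, m ≤ a := fun a ha => hmin a (Multiset.mem_add.2 (Or.inl ha))
    have hminS' : ∀ a ∈ S', m ≤ a := fun a ha => hmin a (Multiset.mem_add.2 (Or.inr ha))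
    -- counts agree
    have hcount : (S.count m : ℝ) = S'.count m := by
      have t1 := tendsto_count S m hm hminS
      have t2 := tendsto_count S' m hm hminS'
      have hEq : (fun x : ℝ => (1 - (S.map fun a => 1 - x ^ a).prod) / x ^ m)
          =ᶠ[𝓝[>] (0:ℝ)] (fun x : ℝ => (1 - (S'.map fun a => 1 - x ^ a).prod) / x ^ m) := by
        filter_upwards [Ioo_mem_nhdsGT_of_mem (Set.mem_Ico.2 ⟨le_refl 0, zero_lt_one⟩)] with x hx
        rw [heq x hx]
      exact tendsto_nhds_unique (t1.congr' hEq) t2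
    have hcountN : S.count m = S'.count m := Nat.cast_injective hcount
    have hmS : m ∈ S ∨ m ∈ S' := by
      rcases Multiset.mem_add.1 hmmem with h | h
      exacts [Or.inl h, Or.inr h]
    have hmS2 : m ∈ S ∧ m ∈ S' := by
      rcases hmS with h | h
      · refine ⟨h, Multiset.count_pos.1 ?_⟩
        rw [← hcountN]; exact Multiset.count_pos.2 h
      · refine ⟨Multiset.count_pos.1 ?_, h⟩
        rw [hcountN]; exact Multiset.count_pos.2 h
    obtain ⟨T, rfl⟩ := Multiset.exists_cons_of_mem hmS2.1
    obtain ⟨T', rfl⟩ := Multiset.exists_cons_of_mem hmS2.2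
    have hT : T = T' := by
      refine ih T T' ?_ (fun a ha => hS a (Multiset.mem_cons_of_mem ha))
        (fun a ha => hS' a (Multiset.mem_cons_of_mem ha)) ?_
      · have := hcard; rw [Multiset.card_cons] at this; omega
      · intro x hx
        have hfac : (1 : ℝ) - x ^ m ≠ 0 := by
          have := Real.rpow_lt_one hx.1.le hx.2 hm; linarith
        have := heq x hx
        rw [Multiset.map_cons, Multiset.prod_cons, Multiset.map_cons, Multiset.prod_cons] at this
        exact mul_left_cancel₀ hfac this
    rw [hT]




lemma tendsto_sinh_div (a : ℝ) :
    Tendsto (fun t : ℝ => Real.sinh (a * t) / t) (𝓝[>] (0:ℝ)) (𝓝 a) := by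
  have hd : HasDerivAt (fun t : ℝ => Real.sinh (a * t)) a 0 := by
    have h1 : HasDerivAt (fun t : ℝ => a * t) a 0 := by
      simpa using (hasDerivAt_id (0:ℝ)).const_mul a
    have h2 := (Real.hasDerivAt_sinh (a * 0)).comp 0 h1
    simp at h2; exact h2
  have := hd.hasDerivWithinAt (s := Set.Ioi (0:ℝ))
  have h3 := hasDerivWithinAt_iff_tendsto_slope.1 this
  have h4 : Tendsto (slope (fun t : ℝ => Real.sinh (a * t)) 0) (𝓝[>] (0:ℝ)) (𝓝 a) := by
    refine h3.mono_left (nhdsWithin_mono _ ?_)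
    intro x hx
    exact ⟨hx, by exact ne_of_gt hx⟩
  refine h4.congr' ?_
  filter_upwards [self_mem_nhdsWithin] with t ht
  simp [slope_def_field, div_eq_iff (ne_of_gt (show (0:ℝ) < t from ht))]

lemma tendsto_sinh_prod_div (H : Multiset ℝ) :
    Tendsto (fun t : ℝ => (H.map fun a => Real.sinh (a * t)).prod / t ^ Multiset.card H)
      (𝓝[>] (0:ℝ)) (𝓝 H.prod) := by
  induction H using Multiset.induction with
  | empty =>
    refine Tendsto.congr' ?_ tendsto_const_nhds
    filter_upwards [self_mem_nhdsWithin] with t ht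
    simp
  | cons a H ih =>
    have key : ∀ t ∈ Set.Ioi (0:ℝ),
        ((a ::ₘ H).map fun b => Real.sinh (b * t)).prod / t ^ Multiset.card (a ::ₘ H)
          = (Real.sinh (a * t) / t) *
            ((H.map fun b => Real.sinh (b * t)).prod / t ^ Multiset.card H) := by
      intro t ht
      have ht' : (t:ℝ) ≠ 0 := ne_of_gt ht
      rw [Multiset.map_cons, Multiset.prod_cons, Multiset.card_cons, pow_succ,
        div_mul_div_comm]
      ring
    refine Tendsto.congr'
      (Filter.eventuallyEq_of_mem self_mem_nhdsWithin fun t ht => (key t ht).symm) ?_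
    simpa [Multiset.prod_cons] using (tendsto_sinh_div a).mul ih

lemma card_eq_of_prod_eq (H H' : Multiset ℝ) (hH : ∀ a ∈ H, 0 < a) (hH' : ∀ a ∈ H', 0 < a)
    (h : ∀ t : ℝ, (H.map fun a => Real.sinh (a * t)).prod
      = (H'.map fun a => Real.sinh (a * t)).prod) :
    Multiset.card H = Multiset.card H' := by
  by_contra hne
  -- wlog card H < card H'
  wlog hlt : Multiset.card H < Multiset.card H' generalizing H H'
  · exact this H' H hH' hH (fun t => (h t).symm) (Ne.symm hne) (by omega)
  have t1 := tendsto_sinh_prod_div H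
  have t2 := tendsto_sinh_prod_div H'
  have t3 : Tendsto (fun t : ℝ => (H'.map fun a => Real.sinh (a * t)).prod / t ^ Multiset.card H)
      (𝓝[>] (0:ℝ)) (𝓝 0) := by
    have hpow : Tendsto (fun t : ℝ => t ^ (Multiset.card H' - Multiset.card H))
        (𝓝[>] (0:ℝ)) (𝓝 0) := by
      have : Tendsto (fun t : ℝ => t ^ (Multiset.card H' - Multiset.card H)) (𝓝 (0:ℝ))
          (𝓝 ((0:ℝ) ^ (Multiset.card H' - Multiset.card H))) :=
        (continuous_pow _).tendsto 0
      rw [zero_pow (by omega)] at this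
      exact this.mono_left nhdsWithin_le_nhds
    have := t2.mul hpow
    rw [mul_zero] at this
    refine this.congr' ?_
    filter_upwards [self_mem_nhdsWithin] with t ht
    have ht' : (t:ℝ) ≠ 0 := ne_of_gt (show (0:ℝ) < t from ht)
    rw [div_mul_eq_mul_div, div_eq_div_iff (pow_ne_zero _ ht') (pow_ne_zero _ ht')]
    rw [mul_assoc, ← pow_add]
    congr 2
    omega
  have hEq : (fun t : ℝ => (H.map fun a => Real.sinh (a * t)).prod / t ^ Multiset.card H)
      = (fun t : ℝ => (H'.map fun a => Real.sinh (a * t)).prod / t ^ Multiset.card H) := by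
    funext t; rw [h t]
  rw [hEq] at t1
  have := tendsto_nhds_unique t1 t3
  exact absurd this (ne_of_gt (msProd_pos hH))




lemma sinh_prod_decomp (H : Multiset ℝ) (t : ℝ) :
    (H.map fun a => Real.sinh (a * t)).prod
      = Real.exp (H.sum * t) * (2:ℝ)⁻¹ ^ Multiset.card H
        * (H.map fun a => 1 - Real.exp (-(2 * (a * t)))).prod := by
  induction H using Multiset.induction with
  | empty => simp
  | cons a H ih =>
    rw [Multiset.map_cons, Multiset.prod_cons, Multiset.map_cons, Multiset.prod_cons,
      Multiset.card_cons, Multiset.sum_cons, ih, pow_succ, add_mul, Real.exp_add]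
    have : Real.sinh (a * t) = Real.exp (a * t) * (1 - Real.exp (-(2 * (a * t)))) * 2⁻¹ := by
      rw [Real.sinh_eq]
      have : Real.exp (-(2 * (a * t))) = Real.exp (-(a*t)) * Real.exp (-(a*t)) := by
        rw [← Real.exp_add]; ring_nf
      rw [this]
      have h2 := Real.exp_ne_zero (a * t)
      field_simp [Real.exp_neg]
      have h3 : Real.exp (a * t) * Real.exp (-(a * t)) = 1 := by rw [← Real.exp_add]; simp
      linear_combination Real.exp (-(a * t)) * h3
    rw [this]
    ring

lemma one_sub_exp_prod_tendsto (H : Multiset ℝ) (hH : ∀ a ∈ H, 0 < a) :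
    Tendsto (fun t : ℝ => (H.map fun a => 1 - Real.exp (-(2 * (a * t)))).prod)
      atTop (𝓝 1) := by
  induction H using Multiset.induction with
  | empty => simpa using tendsto_const_nhds
  | cons a H ih =>
    have ha := hH a (Multiset.mem_cons_self a H)
    have h1 : Tendsto (fun t : ℝ => -(2 * (a * t))) atTop atBot := by
      have h0 : Tendsto (fun t : ℝ => (-(2 * a)) * t) atTop atBot :=
        (tendsto_const_mul_atBot_of_neg (by linarith)).mpr tendsto_id
      exact h0.congr (fun t => by ring)
    have h2 : Tendsto (fun t : ℝ => 1 - Real.exp (-(2 * (a * t)))) atTop (𝓝 1) := by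
      simpa using tendsto_const_nhds.sub (Real.tendsto_exp_atBot.comp h1)
    have h3 := ih fun b hb => hH b (Multiset.mem_cons_of_mem hb)
    simpa [Multiset.prod_cons] using h2.mul h3

lemma one_sub_exp_prod_pos (H : Multiset ℝ) (hH : ∀ a ∈ H, 0 < a) {t : ℝ} (ht : 0 < t) :
    0 < (H.map fun a => 1 - Real.exp (-(2 * (a * t)))).prod := by
  induction H using Multiset.induction with
  | empty => simp
  | cons a H ih =>
    have ha := hH a (Multiset.mem_cons_self a H)
    have : Real.exp (-(2 * (a * t))) < 1 := by
      rw [Real.exp_lt_one_iff]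
      nlinarith
    rw [Multiset.map_cons, Multiset.prod_cons]
    exact mul_pos (by linarith) (ih fun b hb => hH b (Multiset.mem_cons_of_mem hb))

lemma sinh_prod_inj (H H' : Multiset ℝ) (hH : ∀ a ∈ H, 0 < a) (hH' : ∀ a ∈ H', 0 < a)
    (h : ∀ t : ℝ, (H.map fun a => Real.sinh (a * t)).prod
      = (H'.map fun a => Real.sinh (a * t)).prod) : H = H' := by
  have hcard := card_eq_of_prod_eq H H' hH hH' h
  set A := fun t : ℝ => (H.map fun a => 1 - Real.exp (-(2 * (a * t)))).prod with hA
  set B := fun t : ℝ => (H'.map fun a => 1 - Real.exp (-(2 * (a * t)))).prod with hB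
  set c := H.sum - H'.sum with hc
  have key : ∀ t : ℝ, Real.exp (c * t) * A t = B t := by
    intro t
    have h0 := h t
    rw [sinh_prod_decomp, sinh_prod_decomp, hcard] at h0
    have hq : ((2:ℝ)⁻¹ ^ Multiset.card H') ≠ 0 := by positivity
    have e2 : Real.exp (H.sum * t) * A t * ((2:ℝ)⁻¹ ^ Multiset.card H')
        = Real.exp (H'.sum * t) * B t * ((2:ℝ)⁻¹ ^ Multiset.card H') := by
      rw [hA, hB]; linear_combination h0
    have e3 := mul_right_cancel₀ hq e2
    have h3 := Real.exp_ne_zero (H'.sum * t)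
    have hce : Real.exp (c * t) = Real.exp (H.sum * t) / Real.exp (H'.sum * t) := by
      rw [hc, ← Real.exp_sub]; ring_nf
    rw [hce, div_mul_eq_mul_div, e3, mul_comm, mul_div_assoc, div_self h3, mul_one]
  have hAlim := one_sub_exp_prod_tendsto H hH
  have hBlim := one_sub_exp_prod_tendsto H' hH'
  have hexp : Tendsto (fun t : ℝ => Real.exp (c * t)) atTop (𝓝 1) := by
    have hdiv : Tendsto (fun t : ℝ => B t / A t) atTop (𝓝 1) := by
      have := hBlim.div hAlim one_ne_zero; rw [div_one] at this; exact this
    refine hdiv.congr' ?_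
    filter_upwards [eventually_gt_atTop (0:ℝ)] with t ht
    have hAt : A t ≠ 0 := ne_of_gt (one_sub_exp_prod_pos H hH ht)
    rw [← key t, mul_div_assoc, div_self hAt, mul_one]
  have hc0 : c = 0 := by
    rcases lt_trichotomy c 0 with hlt | heq | hgt
    · have hbot : Tendsto (fun t : ℝ => c * t) atTop atBot :=
        (tendsto_const_mul_atBot_of_neg hlt).mpr tendsto_id
      have : Tendsto (fun t : ℝ => Real.exp (c * t)) atTop (𝓝 0) :=
        Real.tendsto_exp_atBot.comp hbot
      have := tendsto_nhds_unique hexp this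
      norm_num at this
    · exact heq
    · have htop : Tendsto (fun t : ℝ => c * t) atTop atTop :=
        Tendsto.const_mul_atTop hgt tendsto_id
      have : Tendsto (fun t : ℝ => Real.exp (c * t)) atTop atTop :=
        Real.tendsto_exp_atTop.comp htop
      exact absurd hexp (not_tendsto_nhds_of_tendsto_atTop this 1)
  have hAB : ∀ t : ℝ, 0 < t → A t = B t := by
    intro t _
    have := key t
    rwa [hc0, zero_mul, Real.exp_zero, one_mul] at this
  -- convert to rpow products
  refine prod_one_sub_rpow_inj (Multiset.card H) H H' rfl hH hH' ?_
  intro x hx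
  have hlog : Real.log x < 0 := Real.log_neg hx.1 hx.2
  set t := Real.log x / (-2) with ht
  have htpos : 0 < t := by
    rw [ht]
    have : (0:ℝ) < -Real.log x := by linarith
    rw [div_neg, div_eq_mul_inv]
    nlinarith
  have hmap : ∀ (S : Multiset ℝ),
      (S.map fun a => 1 - Real.exp (-(2 * (a * t)))) = S.map fun a => 1 - x ^ a := by
    intro S
    apply Multiset.map_congr rfl
    intro a _
    have : -(2 * (a * t)) = Real.log x * a := by rw [ht]; ring
    rw [this, Real.rpow_def_of_pos hx.1 a]
  have := hAB t htpos
  rw [hA, hB] at this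
  simp only [] at this
  rw [hmap H, hmap H'] at this
  exact this




lemma sinh_part_pos (H : Multiset ℝ) (hH : ∀ a ∈ H, 0 < a) {t : ℝ} (ht : 0 < t) :
    0 < (H.map fun a => Real.sinh (a * t)).prod := by
  apply msProd_pos
  intro x hx
  obtain ⟨a, ha, rfl⟩ := Multiset.mem_map.1 hx
  exact Real.sinh_pos_iff.2 (mul_pos (hH a ha) ht)

lemma exists_multiple (E : Multiset ℝ) (hE : ∀ a ∈ E, 0 < a) {M : ℝ} (hM : 0 < M)
    (h : (E.map fun a => Real.sin (a * (Real.pi / M))).prod = 0) :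
    ∃ b ∈ E, M ≤ b := by
  have h0 : (0:ℝ) ∈ E.map fun a => Real.sin (a * (Real.pi / M)) :=
    Multiset.prod_eq_zero_iff.1 h
  obtain ⟨b, hb, hb0⟩ := Multiset.mem_map.1 h0
  obtain ⟨n, hn⟩ := Real.sin_eq_zero_iff.1 hb0
  have hbpos := hE b hb
  have hbM : b = n * M := by
    have h2 : (↑n * M) * Real.pi = b * Real.pi := by
      field_simp at hn
      linear_combination Real.pi * hn
    exact (mul_right_cancel₀ Real.pi_ne_zero h2).symm
  have hn1 : (1:ℝ) ≤ (n:ℝ) := by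
    have hnpos : (0:ℤ) < n := by
      by_contra hc
      push_neg at hc
      have : (n:ℝ) ≤ 0 := by exact_mod_cast hc
      nlinarith
    exact_mod_cast hnpos
  exact ⟨b, hb, by nlinarith⟩

lemma dense_sin_ne (M : ℝ) (hM : 0 < M) : Dense {t : ℝ | Real.sin (M * t) ≠ 0} := by
  have hcount : {t : ℝ | Real.sin (M * t) = 0}.Countable := by
    have hsub : {t : ℝ | Real.sin (M * t) = 0} ⊆
        Set.range (fun n : ℤ => (n : ℝ) * Real.pi / M) := by
      intro t ht
      obtain ⟨n, hn⟩ := Real.sin_eq_zero_iff.1 ht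
      exact ⟨n, by field_simp [hn]; exact hn⟩
    exact (Set.countable_range _).mono hsub
  have hd := hcount.dense_compl ℝ
  exact hd

lemma main_lemma : ∀ (k : ℕ) (E E' H H' : Multiset ℝ), Multiset.card E = k →
    (∀ a ∈ H, 0 < a) → (∀ a ∈ H', 0 < a) → (∀ a ∈ E, 0 < a) → (∀ a ∈ E', 0 < a) →
    (∀ t : ℝ, (H.map fun a => Real.sinh (a * t)).prod * (E.map fun a => Real.sin (a * t)).prod
      = (H'.map fun a => Real.sinh (a * t)).prod * (E'.map fun a => Real.sin (a * t)).prod) →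
    H = H' ∧ E = E' := by
  intro k
  induction k with
  | zero =>
    intro E E' H H' hcard hH hH' hE hE' h
    rw [Multiset.card_eq_zero] at hcard
    subst hcard
    have hE'0 : E' = 0 := by
      by_contra hne
      obtain ⟨a, ha⟩ := Multiset.exists_mem_of_ne_zero hne
      have hapos := hE' a ha
      have ht₀pos : 0 < Real.pi / a := by positivity
      have hsin0 : Real.sin (a * (Real.pi / a)) = 0 := by
        rw [mul_div_cancel₀ _ (ne_of_gt hapos), Real.sin_pi]
      have hrhs : (E'.map fun b => Real.sin (b * (Real.pi / a))).prod = 0 :=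
        Multiset.prod_eq_zero (Multiset.mem_map.2 ⟨a, ha, hsin0⟩)
      have ht := h (Real.pi / a)
      rw [hrhs, mul_zero] at ht
      simp only [Multiset.map_zero, Multiset.prod_zero, mul_one] at ht
      exact absurd ht (ne_of_gt (sinh_part_pos H hH ht₀pos))
    subst hE'0
    refine ⟨sinh_prod_inj H H' hH hH' ?_, rfl⟩
    intro t
    have ht := h t
    simpa using ht
  | succ k ih =>
    intro E E' H H' hcard hH hH' hE hE' h
    have hEne : E ≠ 0 := by intro h0; rw [h0] at hcard; simp at hcard
    obtain ⟨M, hMmem, hMmax⟩ := exists_max E hEne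
    have hMpos := hE M hMmem
    have vanish : ∀ (H₁ E₁ : Multiset ℝ), (∀ a ∈ H₁, 0 < a) → ∀ {s : ℝ}, 0 < s →
        (H₁.map fun a => Real.sinh (a * s)).prod *
          (E₁.map fun a => Real.sin (a * s)).prod = 0 →
        (E₁.map fun a => Real.sin (a * s)).prod = 0 := by
      intro H₁ E₁ hpos s hs hzero
      have hpos' := sinh_part_pos H₁ hpos hs
      rcases mul_eq_zero.1 hzero with h1 | h1
      · exact absurd h1 (ne_of_gt hpos')
      · exact h1
    have hsinM : Real.sin (M * (Real.pi / M)) = 0 := by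
      rw [mul_div_cancel₀ _ (ne_of_gt hMpos), Real.sin_pi]
    have hLzero : (E.map fun a => Real.sin (a * (Real.pi / M))).prod = 0 :=
      Multiset.prod_eq_zero (Multiset.mem_map.2 ⟨M, hMmem, hsinM⟩)
    have hRzero : (E'.map fun a => Real.sin (a * (Real.pi / M))).prod = 0 := by
      apply vanish H' E' hH' (show (0:ℝ) < Real.pi / M by positivity)
      rw [← h (Real.pi / M), hLzero, mul_zero]
    obtain ⟨b, hbE', hbM⟩ := exists_multiple E' hE' hMpos hRzero
    have hE'ne : E' ≠ 0 := fun h0 => by subst h0; exact absurd hbE' (by simp)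
    obtain ⟨M', hM'mem, hM'max⟩ := exists_max E' hE'ne
    have hM'pos := hE' M' hM'mem
    have hsinM' : Real.sin (M' * (Real.pi / M')) = 0 := by
      rw [mul_div_cancel₀ _ (ne_of_gt hM'pos), Real.sin_pi]
    have hR'zero : (E'.map fun a => Real.sin (a * (Real.pi / M'))).prod = 0 :=
      Multiset.prod_eq_zero (Multiset.mem_map.2 ⟨M', hM'mem, hsinM'⟩)
    have hL'zero : (E.map fun a => Real.sin (a * (Real.pi / M'))).prod = 0 := by
      apply vanish H E hH (show (0:ℝ) < Real.pi / M' by positivity)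
      rw [h (Real.pi / M'), hR'zero, mul_zero]
    obtain ⟨c, hcE, hcM'⟩ := exists_multiple E hE hM'pos hL'zero
    have hMM' : M = M' := le_antisymm (le_trans hbM (hM'max b hbE'))
      (le_trans hcM' (hMmax c hcE))
    have hMinE' : M ∈ E' := hMM' ▸ hM'mem
    obtain ⟨E₀, rfl⟩ := Multiset.exists_cons_of_mem hMmem
    obtain ⟨E₀', rfl⟩ := Multiset.exists_cons_of_mem hMinE'
    -- cancel the common factor sin (M t)
    have key : ∀ t : ℝ,
        (H.map fun a => Real.sinh (a * t)).prod * (E₀.map fun a => Real.sin (a * t)).prod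
          = (H'.map fun a => Real.sinh (a * t)).prod *
            (E₀'.map fun a => Real.sin (a * t)).prod := by
      have hcont1 : Continuous (fun t : ℝ =>
          (H.map fun a => Real.sinh (a * t)).prod *
            (E₀.map fun a => Real.sin (a * t)).prod) := by
        apply Continuous.mul
        · exact continuous_multiset_prod H fun a _ =>
            Real.continuous_sinh.comp (continuous_const.mul continuous_id)
        · exact continuous_multiset_prod E₀ fun a _ =>
            Real.continuous_sin.comp (continuous_const.mul continuous_id)
      have hcont2 : Continuous (fun t : ℝ =>
          (H'.map fun a => Real.sinh (a * t)).prod *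
            (E₀'.map fun a => Real.sin (a * t)).prod) := by
        apply Continuous.mul
        · exact continuous_multiset_prod H' fun a _ =>
            Real.continuous_sinh.comp (continuous_const.mul continuous_id)
        · exact continuous_multiset_prod E₀' fun a _ =>
            Real.continuous_sin.comp (continuous_const.mul continuous_id)
      have heq := Continuous.ext_on (dense_sin_ne M hMpos) hcont1 hcont2 ?_
      · exact fun t => congrFun heq t
      · intro t ht
        have hsne : Real.sin (M * t) ≠ 0 := ht
        have h0 := h t
        rw [Multiset.map_cons, Multiset.prod_cons, Multiset.map_cons, Multiset.prod_cons] at h0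
        have h1 : Real.sin (M * t) *
            ((H.map fun a => Real.sinh (a * t)).prod *
              (E₀.map fun a => Real.sin (a * t)).prod)
            = Real.sin (M * t) *
            ((H'.map fun a => Real.sinh (a * t)).prod *
              (E₀'.map fun a => Real.sin (a * t)).prod) := by
          linear_combination h0
        exact mul_left_cancel₀ hsne h1
    have hcard₀ : Multiset.card E₀ = k := by
      have := hcard; rw [Multiset.card_cons] at this; omega
    obtain ⟨hHH', hEE'⟩ := ih E₀ E₀' H H' hcard₀ hH hH'
      (fun a ha => hE a (Multiset.mem_cons_of_mem ha))
      (fun a ha => hE' a (Multiset.mem_cons_of_mem ha)) key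
    exact ⟨hHH', by rw [hEE']⟩

lemma card_filter_lt (n r : ℕ) (hr : r ≤ n) :
    (Finset.univ.filter (fun j : Fin n => (j : ℕ) < r)).card = r := by
  have : (Finset.univ.filter (fun j : Fin n => (j : ℕ) < r))
      = (Finset.range r).attachFin (fun m hm => lt_of_lt_of_le (Finset.mem_range.1 hm) hr) := by
    ext j; simp
  rw [this, Finset.card_attachFin, Finset.card_range]

end SinhSinRigidityAux

/-- Uniqueness for products of hyperbolic and trigonometric sines: if
`∏_{j<r} sinh(αⱼ t) ∏_{r≤j<n} sin(αⱼ t) = ∏_{j<r'} sinh(βⱼ t) ∏_{r'≤j<n} sin(βⱼ t)`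
for all `t`, with all `αⱼ, βⱼ > 0`, then `r = r'` and the multisets of hyperbolic
frequencies and the multisets of elliptic frequencies agree. -/
theorem sinh_sin_product_rigidity
    (n : ℕ) (hn : 1 ≤ n) (r r' : ℕ) (hr : r ≤ n) (hr' : r' ≤ n)
    (α β : Fin n → ℝ) (hα : ∀ j, 0 < α j) (hβ : ∀ j, 0 < β j)
    (h : ∀ t : ℝ,
      (∏ j ∈ Finset.univ.filter (fun j : Fin n => (j : ℕ) < r),
          Real.sinh (α j * t)) *
      (∏ j ∈ Finset.univ.filter (fun j : Fin n => r ≤ (j : ℕ)),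
          Real.sin (α j * t)) =
      (∏ j ∈ Finset.univ.filter (fun j : Fin n => (j : ℕ) < r'),
          Real.sinh (β j * t)) *
      (∏ j ∈ Finset.univ.filter (fun j : Fin n => r' ≤ (j : ℕ)),
          Real.sin (β j * t))) :
    r = r' ∧
    (Finset.univ.filter (fun j : Fin n => (j : ℕ) < r)).val.map α =
      (Finset.univ.filter (fun j : Fin n => (j : ℕ) < r')).val.map β ∧
    (Finset.univ.filter (fun j : Fin n => r ≤ (j : ℕ))).val.map α =
      (Finset.univ.filter (fun j : Fin n => r' ≤ (j : ℕ))).val.map β := by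
  classical
  set Hα := (Finset.univ.filter (fun j : Fin n => (j : ℕ) < r)).val.map α with hHα
  set Eα := (Finset.univ.filter (fun j : Fin n => r ≤ (j : ℕ))).val.map α with hEα
  set Hβ := (Finset.univ.filter (fun j : Fin n => (j : ℕ) < r')).val.map β with hHβ
  set Eβ := (Finset.univ.filter (fun j : Fin n => r' ≤ (j : ℕ))).val.map β with hEβ
  have hposH : ∀ a ∈ Hα, 0 < a := by
    intro a ha
    obtain ⟨j, _, rfl⟩ := Multiset.mem_map.1 ha
    exact hα j
  have hposE : ∀ a ∈ Eα, 0 < a := by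
    intro a ha
    obtain ⟨j, _, rfl⟩ := Multiset.mem_map.1 ha
    exact hα j
  have hposH' : ∀ a ∈ Hβ, 0 < a := by
    intro a ha
    obtain ⟨j, _, rfl⟩ := Multiset.mem_map.1 ha
    exact hβ j
  have hposE' : ∀ a ∈ Eβ, 0 < a := by
    intro a ha
    obtain ⟨j, _, rfl⟩ := Multiset.mem_map.1 ha
    exact hβ j
  have hprod : ∀ t : ℝ,
      (Hα.map fun a => Real.sinh (a * t)).prod * (Eα.map fun a => Real.sin (a * t)).prod
        = (Hβ.map fun a => Real.sinh (a * t)).prod *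
          (Eβ.map fun a => Real.sin (a * t)).prod := by
    intro t
    rw [hHα, hEα, hHβ, hEβ, Multiset.map_map, Multiset.map_map, Multiset.map_map,
      Multiset.map_map]
    simpa only [Finset.prod_eq_multiset_prod, Function.comp_def] using h t
  obtain ⟨hH, hE⟩ := main_lemma (Multiset.card Eα) Eα Eβ Hα Hβ rfl
    hposH hposH' hposE hposE' hprod
  refine ⟨?_, hH, hE⟩
  have hcard := congrArg Multiset.card hH
  rwa [hHα, hHβ, Multiset.card_map, Multiset.card_map,
    ← Finset.card_def, ← Finset.card_def, card_filter_lt n r hr, card_filter_lt n r' hr']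
    at hcard
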